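/- With the order < of iterated power sets as above, define a successor relation: at level 0, sc({0},{1}) only; at level r+1, sc(A,B) iff there exists a level-r element c with c ∈ B \ A, every level-r element c* < c satisfies c* ∈ A \ B, and every level-r element c* > c satisfies c* ∈ A ↔ c* ∈ B. Then sc(A,B) holds if and only if B is the immediate successor of A in the total order <. -/

import Mathlib

/-- The `r`-th iterated power set of the two-element set `{{0},{1}}`:
`It 0` is the two-element type (`false` for `{0}`, `true` for `{1}`) and
`It (r+1) = powerset (It r)`. -/
def It : ℕ → Type
  | 0 => Bool
  | r + 1 => Set (It r)

/-- Membership between consecutive levels (`It (r+1)` is `Set (It r)`). -/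
def itMem {r : ℕ} (c : It r) (A : It (r + 1)) : Prop := A c

instance {r : ℕ} : Membership (It r) (It (r + 1)) := ⟨fun A c => itMem c A⟩

/-- The recursively defined strict order: `{0} < {1}` at level `0`, and at level
`r+1`, `A < B` iff some level-`r` element `c ∈ B \ A` is such that all `c* > c`
agree between `A` and `B`. -/
def ltIt : (r : ℕ) → It r → It r → Prop
  | 0, a, b => a = false ∧ b = true
  | r + 1, A, B => ∃ c : It r, c ∈ B ∧ c ∉ A ∧
      ∀ c' : It r, ltIt r c c' → (c' ∈ A ↔ c' ∈ B)

/-- The successor relation, mirroring binary increment: at level `0` only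
`sc({0},{1})`; at level `r+1`, `sc(A,B)` iff some level-`r` element `c ∈ B \ A`
has every `c* < c` in `A \ B` and every `c* > c` agreeing between `A` and `B`. -/
def scIt : (r : ℕ) → It r → It r → Prop
  | 0, a, b => a = false ∧ b = true
  | r + 1, A, B => ∃ c : It r, c ∈ B ∧ c ∉ A ∧
      (∀ c' : It r, ltIt r c' c → c' ∈ A ∧ c' ∉ B) ∧
      (∀ c' : It r, ltIt r c c' → (c' ∈ A ↔ c' ∈ B))

instance itFinite : ∀ r, Finite (It r)
  | 0 => inferInstanceAs (Finite Bool)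
  | r+1 => letI := itFinite r; inferInstanceAs (Finite (Set (It r)))

lemma ltIt_irrefl (r : ℕ) (a : It r) : ¬ ltIt r a a := by
  cases r with
  | zero => rintro ⟨h1, h2⟩; rw [h1] at h2; exact Bool.noConfusion h2
  | succ r => rintro ⟨c, hB, hA, _⟩; exact hA hB

lemma ltIt_props : ∀ r : ℕ,
    (∀ a b c : It r, ltIt r a b → ltIt r b c → ltIt r a c) ∧
    (∀ a b : It r, a ≠ b → ltIt r a b ∨ ltIt r b a) := by
  intro r
  induction r with
  | zero =>
    constructor
    · rintro a b c ⟨h1, h2⟩ ⟨h3, h4⟩; rw [h2] at h3; exact Bool.noConfusion h3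
    · intro a b hab
      cases a <;> cases b
      · exact absurd rfl hab
      · exact Or.inl ⟨rfl, rfl⟩
      · exact Or.inr ⟨rfl, rfl⟩
      · exact absurd rfl hab
  | succ r ih =>
    obtain ⟨htrans, htri⟩ := ih
    constructor
    · rintro A B C ⟨c1, hc1B, hc1A, hab1⟩ ⟨c2, hc2C, hc2B, hab2⟩
      rcases eq_or_ne c1 c2 with h | h
      · exact absurd hc1B (h ▸ hc2B)
      rcases htri c1 c2 h with hlt | hlt
      · refine ⟨c2, hc2C, fun hc2A => hc2B ((hab1 c2 hlt).1 hc2A), fun x hx => ?_⟩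
        exact (hab1 x (htrans _ _ _ hlt hx)).trans (hab2 x hx)
      · refine ⟨c1, (hab2 c1 hlt).1 hc1B, hc1A, fun x hx => ?_⟩
        exact (hab1 x hx).trans (hab2 x (htrans _ _ _ hlt hx))
    · intro A B hAB
      have hdiff : ∃ x : It r, ¬ (x ∈ A ↔ x ∈ B) := by
        by_contra h
        push_neg at h
        apply hAB
        funext x
        exact propext (h x)
      -- take maximal differing element
      haveI := itFinite r
      haveI : IsTrans (It r) (fun x y => ltIt r y x) :=
        ⟨fun a b c h1 h2 => htrans _ _ _ h2 h1⟩
      haveI : IsIrrefl (It r) (fun x y => ltIt r y x) := ⟨fun a => ltIt_irrefl r a⟩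
      have wf := Finite.wellFounded_of_trans_of_irrefl (fun x y : It r => ltIt r y x)
      obtain ⟨m, hm, hmax⟩ := wf.has_min {x | ¬ (x ∈ A ↔ x ∈ B)} hdiff
      have hagree : ∀ x, ltIt r m x → (x ∈ A ↔ x ∈ B) := by
        intro x hx
        by_contra hne
        exact hmax x hne hx
      by_cases hmB : m ∈ B
      · left
        exact ⟨m, hmB, fun hmA => hm ⟨fun _ => hmB, fun _ => hmA⟩, hagree⟩
      · right
        have hmA : m ∈ A := by
          by_contra hmA
          exact hm ⟨fun h => absurd h hmA, fun h => absurd h hmB⟩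
        exact ⟨m, hmA, hmB, fun x hx => (hagree x hx).symm⟩

lemma exists_min {r : ℕ} (S : It r → Prop) (hS : ∃ x, S x) :
    ∃ m, S m ∧ (∀ x, S x → ¬ ltIt r x m) ∧ (∀ x, S x → x ≠ m → ltIt r m x) := by
  haveI := itFinite r
  obtain ⟨htrans, htri⟩ := ltIt_props r
  haveI : IsTrans (It r) (ltIt r) := ⟨fun a b c => htrans a b c⟩
  haveI : IsIrrefl (It r) (ltIt r) := ⟨fun a => ltIt_irrefl r a⟩
  have wf := Finite.wellFounded_of_trans_of_irrefl (ltIt r)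
  obtain ⟨m, hm, hmin⟩ := wf.has_min {x | S x} hS
  refine ⟨m, hm, fun x hx => hmin x hx, fun x hx hne => ?_⟩
  rcases htri m x (Ne.symm hne) with h | h
  · exact h
  · exact absurd h (hmin x hx)

lemma exists_max {r : ℕ} (S : It r → Prop) (hS : ∃ x, S x) :
    ∃ m, S m ∧ (∀ x, S x → ¬ ltIt r m x) := by
  haveI := itFinite r
  obtain ⟨htrans, _⟩ := ltIt_props r
  haveI : IsTrans (It r) (fun x y => ltIt r y x) := ⟨fun a b c h1 h2 => htrans _ _ _ h2 h1⟩
  haveI : IsIrrefl (It r) (fun x y => ltIt r y x) := ⟨fun a => ltIt_irrefl r a⟩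
  have wf := Finite.wellFounded_of_trans_of_irrefl (fun x y : It r => ltIt r y x)
  obtain ⟨m, hm, hmax⟩ := wf.has_min {x | S x} hS
  exact ⟨m, hm, fun x hx => hmax x hx⟩

lemma sc_lt (r : ℕ) (A B : It r) (h : scIt r A B) : ltIt r A B := by
  cases r with
  | zero => exact h
  | succ r => obtain ⟨c, hB, hA, _, habove⟩ := h; exact ⟨c, hB, hA, habove⟩

lemma sc_no_mid (r : ℕ) (A B : It r) (h : scIt r A B) :
    ∀ C : It r, ¬ (ltIt r A C ∧ ltIt r C B) := by
  cases r with
  | zero =>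
    rintro C ⟨⟨h1, h2⟩, ⟨h3, h4⟩⟩; rw [h2] at h3; exact Bool.noConfusion h3
  | succ r =>
    obtain ⟨htrans, htri⟩ := ltIt_props r
    obtain ⟨c, hcB, hcA, hbelow, habove⟩ := h
    rintro C ⟨⟨e, heC, heA, heab⟩, ⟨d, hdB, hdC, hdab⟩⟩
    -- compare d with c
    rcases eq_or_ne d c with rfl | hdc
    · -- d = c : compare e with c
      rcases eq_or_ne e d with rfl | hed
      · exact hdC heC
      rcases htri e d hed with h1 | h1
      · -- e < c, so e ∈ A by hbelow, contradiction
        exact heA (hbelow e h1).1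
      · -- e > c: e ∈ C → e ∈ B (via hdab) → e ∈ A (via habove), contra
        exact heA ((habove e h1).2 ((hdab e h1).1 heC))
    rcases htri d c hdc with h1 | h1
    · -- d < c : d ∈ B contradicts hbelow
      exact (hbelow d h1).2 hdB
    · -- d > c : d ∈ A ↔ d ∈ B so d ∈ A; compare e with d
      have hdA : d ∈ A := (habove d h1).2 hdB
      rcases eq_or_ne e d with rfl | hed
      · exact hdC heC
      rcases htri e d hed with h2 | h2
      · -- e < d : d ∈ A → d ∈ C via heab, contra
        exact hdC ((heab d h2).1 hdA)
      · -- e > d : e ∈ C → e ∈ B via hdab; e > c so e ∈ A, contra heA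
        exact heA ((habove e (htrans _ _ _ h1 h2)).2 ((hdab e h2).1 heC))

lemma exists_sc : ∀ (r : ℕ) (A B : It r), ltIt r A B →
    ∃ D : It r, scIt r A D ∧ (D = B ∨ ltIt r D B) := by
  intro r
  cases r with
  | zero =>
    rintro A B ⟨h1, h2⟩
    exact ⟨B, ⟨h1, h2⟩, Or.inl rfl⟩
  | succ r =>
    rintro A B ⟨b, hbB, hbA, hbab⟩
    obtain ⟨htrans, htri⟩ := ltIt_props r
    -- c : least element not in A
    obtain ⟨c, hcA, hcmin, hcleast⟩ := exists_min (fun x => ¬ x ∈ A) ⟨b, hbA⟩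
    -- D = (A ∩ {x | c < x}) ∪ {c}
    set D : It (r+1) := (fun x => (itMem x A ∧ ltIt r c x) ∨ x = c) with hD
    have hmemD : ∀ x : It r, x ∈ D ↔ ((x ∈ A ∧ ltIt r c x) ∨ x = c) := fun x => Iff.rfl
    have hDabove : ∀ x : It r, ltIt r c x → (x ∈ A ↔ x ∈ D) := by
      intro x hx
      rw [hmemD]
      constructor
      · intro h; exact Or.inl ⟨h, hx⟩
      · rintro (⟨h, _⟩ | rfl)
        · exact h
        · exact absurd hx (ltIt_irrefl r x)
    have hDbelow : ∀ x : It r, ltIt r x c → x ∈ A ∧ x ∉ D := by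
      intro x hx
      refine ⟨by_contra fun hxa => (hcmin x hxa) hx, ?_⟩
      rw [hmemD]
      rintro (⟨_, h⟩ | rfl)
      · exact ltIt_irrefl r x (htrans _ _ _ hx h)
      · exact ltIt_irrefl r x hx
    have hcD : c ∈ D := (hmemD c).2 (Or.inr rfl)
    have hsc : scIt (r+1) A D := ⟨c, hcD, hcA, hDbelow, hDabove⟩
    refine ⟨D, hsc, ?_⟩
    -- now show D = B or D < B
    have hcb : c = b ∨ ltIt r c b := by
      rcases eq_or_ne c b with h | h
      · exact Or.inl h
      · rcases htri c b h with h1 | h1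
        · exact Or.inr h1
        · exact absurd h1 (hcmin b hbA)
    rcases hcb with rfl | hcb
    · -- c = b
      by_cases hex : ∃ x : It r, x ∈ B ∧ ltIt r x c
      · -- D < B with witness max such x
        obtain ⟨e, ⟨heB, hec⟩, hemax⟩ := exists_max _ hex
        right
        refine ⟨e, heB, (hDbelow e hec).2, fun x hx => ?_⟩
        rcases eq_or_ne x c with rfl | hxc
        · exact iff_of_true hcD hbB
        rcases htri x c hxc with h1 | h1
        · -- x < c : x ∉ D, x ∉ B (maximality of e)
          constructor
          · intro hxD; exact absurd hxD (hDbelow x h1).2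
          · intro hxB; exact absurd hx (hemax x ⟨hxB, h1⟩)
        · -- x > c : x ∈ D ↔ x ∈ A ↔ x ∈ B
          exact (hDabove x h1).symm.trans (hbab x h1)
      · -- D = B
        left
        push_neg at hex
        have : ∀ x : It r, x ∈ D ↔ x ∈ B := by
          intro x
          rcases eq_or_ne x c with rfl | hxc
          · exact iff_of_true hcD hbB
          rcases htri x c hxc with h1 | h1
          · constructor
            · intro hxD; exact absurd hxD (hDbelow x h1).2
            · intro hxB; exact absurd h1 (hex x hxB)
          · exact (hDabove x h1).symm.trans (hbab x h1)
        funext x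
        exact propext (this x)
    · -- c < b : D < B with witness b
      right
      refine ⟨b, hbB, ?_, fun x hx => ?_⟩
      · rw [hmemD]
        rintro (⟨h, _⟩ | rfl)
        · exact hbA h
        · exact ltIt_irrefl r b hcb
      · exact ((hDabove x (htrans _ _ _ hcb hx)).symm).trans (hbab x hx)


/-- `sc(A,B)` holds iff `B` is the immediate successor of `A` in the strict total
order `<`. -/
theorem scIt_iff_immediate_succ (r : ℕ) (A B : It r) :
    scIt r A B ↔ (ltIt r A B ∧ ∀ C : It r, ¬ (ltIt r A C ∧ ltIt r C B)) := by
  constructor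
  · intro h
    exact ⟨sc_lt r A B h, sc_no_mid r A B h⟩
  · rintro ⟨hlt, hmid⟩
    obtain ⟨D, hsc, hDB⟩ := exists_sc r A B hlt
    rcases hDB with rfl | hDB
    · exact hsc
    · exact absurd ⟨sc_lt r A D hsc, hDB⟩ (hmid D)
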